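/- Every factor of a rich word is rich. -/
import Mathlib


/-- The set of palindromic factors of a word `w` (including the empty word). -/
def palFactors {α : Type*} [DecidableEq α] (w : List α) : Finset (List α) :=
  ((w.inits.flatMap List.tails).filter fun u => u.reverse = u).toFinset

/-- A word is rich if it has `|w| + 1` distinct palindromic factors
(including the empty word). -/
def Rich {α : Type*} [DecidableEq α] (w : List α) : Prop :=
  (palFactors w).card = w.length + 1

lemma mem_palFactors {α : Type*} [DecidableEq α] {u w : List α} :
    u ∈ palFactors w ↔ u <:+: w ∧ u.reverse = u := by
  simp only [palFactors, List.mem_toFinset, List.mem_filter, List.mem_flatMap,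
    List.mem_inits, List.mem_tails, decide_eq_true_eq]
  constructor
  · rintro ⟨⟨p, hp, hs⟩, hpal⟩
    exact ⟨hs.isInfix.trans hp.isInfix, hpal⟩
  · rintro ⟨⟨s, t, h⟩, hpal⟩
    exact ⟨⟨s ++ u, ⟨t, by simpa using h⟩, List.suffix_append s u⟩, hpal⟩

lemma palFactors_mono {α : Type*} [DecidableEq α] {u w : List α} (h : u <:+: w) :
    palFactors u ⊆ palFactors w := by
  intro p hp
  rw [mem_palFactors] at hp ⊢
  exact ⟨hp.1.trans h, hp.2⟩

lemma palFactors_reverse {α : Type*} [DecidableEq α] (w : List α) :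
    palFactors w.reverse = palFactors w := by
  ext u
  simp only [mem_palFactors]
  constructor
  · rintro ⟨h, hpal⟩
    refine ⟨?_, hpal⟩
    rw [← List.reverse_infix, hpal]; exact h
  · rintro ⟨h, hpal⟩
    refine ⟨?_, hpal⟩
    rw [← List.reverse_infix, List.reverse_reverse, hpal]; exact h

/-- A new factor of `w ++ [a]` must be a suffix. -/
lemma suffix_of_new_factor {α : Type*} [DecidableEq α] {u w : List α} {a : α}
    (h : u <:+: w ++ [a]) (hn : ¬ u <:+: w) : u <:+ w ++ [a] := by
  obtain ⟨s, t, ht⟩ := h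
  rcases eq_or_ne t [] with rfl | hne
  · exact ⟨s, by simpa using ht⟩
  · exfalso
    apply hn
    have h2 : (s ++ u ++ t.dropLast) ++ [t.getLast hne] = w ++ [a] := by
      rw [← ht]; simp [List.dropLast_append_getLast hne]
    have := (List.append_inj h2 (by
      have hl := congrArg List.length h2
      simp only [List.length_append, List.length_dropLast, List.length_singleton] at hl ⊢
      have := List.length_pos_iff.mpr hne
      omega)).1
    exact ⟨s, t.dropLast, this⟩

lemma card_palFactors_append_singleton {α : Type*} [DecidableEq α] (w : List α) (a : α) :
    (palFactors (w ++ [a])).card ≤ (palFactors w).card + 1 := by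
  have hsub : palFactors w ⊆ palFactors (w ++ [a]) :=
    palFactors_mono (List.prefix_append w [a]).isInfix
  have hdiff : (palFactors (w ++ [a]) \ palFactors w).card ≤ 1 := by
    rw [Finset.card_le_one]
    intro p hp q hq
    simp only [Finset.mem_sdiff, mem_palFactors] at hp hq
    obtain ⟨⟨hpi, hppal⟩, hpn⟩ := hp
    obtain ⟨⟨hqi, hqpal⟩, hqn⟩ := hq
    have hpn' : ¬ p <:+: w := fun h => hpn ⟨h, hppal⟩
    have hqn' : ¬ q <:+: w := fun h => hqn ⟨h, hqpal⟩
    have hps : p <:+ w ++ [a] := suffix_of_new_factor hpi hpn'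
    have hqs : q <:+ w ++ [a] := suffix_of_new_factor hqi hqn'
    -- key: a shorter palindromic suffix occurs in w
    have key : ∀ p q : List α, p.reverse = p → q.reverse = q →
        p <:+ w ++ [a] → q <:+ w ++ [a] → p.length < q.length → p <:+: w := by
      intro p q hppal hqpal hps hqs hlt
      have hpq : p <:+ q := List.suffix_of_suffix_length_le hps hqs hlt.le
      have hpq' : p <+: q := by
        have := List.reverse_prefix.mpr hpq
        rwa [hppal, hqpal] at this
      have hqne : q ≠ [] := by
        intro h; rw [h] at hlt; simp at hlt
      have hpd : p <+: q.dropLast := by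
        refine List.prefix_of_prefix_length_le hpq' (List.dropLast_prefix q) ?_
        rw [List.length_dropLast]
        omega
      have hqd : q.dropLast <:+ w := by
        obtain ⟨s, hs⟩ := hqs
        refine ⟨s, ?_⟩
        have h2 : (s ++ q.dropLast) ++ [q.getLast hqne] = w ++ [a] := by
          rw [← hs]; simp [List.dropLast_append_getLast hqne]
        exact (List.append_inj h2 (by
          have hl := congrArg List.length h2
          simp only [List.length_append, List.length_dropLast, List.length_singleton] at hl ⊢
          have := List.length_pos_iff.mpr hqne
          omega)).1
      exact hpd.isInfix.trans hqd.isInfix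
    rcases lt_trichotomy p.length q.length with h | h | h
    · exact absurd (key p q hppal hqpal hps hqs h) hpn'
    · rcases List.suffix_or_suffix_of_suffix hps hqs with hh | hh
      · exact hh.eq_of_length_le h.ge
      · exact (hh.eq_of_length_le h.le).symm
    · exact absurd (key q p hqpal hppal hqs hps h) hqn'
  calc (palFactors (w ++ [a])).card
      = (palFactors w ∪ (palFactors (w ++ [a]) \ palFactors w)).card := by
        rw [Finset.union_sdiff_of_subset hsub]
    _ ≤ (palFactors w).card + (palFactors (w ++ [a]) \ palFactors w).card :=
        Finset.card_union_le _ _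
    _ ≤ (palFactors w).card + 1 := by omega

lemma card_palFactors_append {α : Type*} [DecidableEq α] (w t : List α) :
    (palFactors (w ++ t)).card ≤ (palFactors w).card + t.length := by
  induction t using List.reverseRecOn with
  | nil => simp
  | append_singleton t a ih =>
    have := card_palFactors_append_singleton (w ++ t) a
    rw [← List.append_assoc]
    simp only [List.length_append, List.length_singleton]
    omega

lemma card_palFactors_le {α : Type*} [DecidableEq α] (w : List α) :
    (palFactors w).card ≤ w.length + 1 := by
  have := card_palFactors_append ([] : List α) w
  have h0 : (palFactors ([] : List α)).card = 1 := by
    simp [palFactors]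
  simpa [h0, Nat.add_comm] using this

lemma rich_of_prefix {α : Type*} [DecidableEq α] {w p : List α} (hrich : Rich w)
    (hp : p <+: w) : Rich p := by
  obtain ⟨t, rfl⟩ := hp
  have h1 := card_palFactors_append p t
  have h2 := card_palFactors_le p
  unfold Rich at hrich ⊢
  rw [List.length_append] at hrich
  omega

lemma rich_reverse {α : Type*} [DecidableEq α] {w : List α} (hrich : Rich w) :
    Rich w.reverse := by
  unfold Rich at *
  rw [palFactors_reverse, List.length_reverse]
  exact hrich

lemma rich_of_suffix {α : Type*} [DecidableEq α] {w s : List α} (hrich : Rich w)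
    (hs : s <:+ w) : Rich s := by
  have h1 : s.reverse <+: w.reverse := List.reverse_prefix.mpr hs
  have h2 := rich_of_prefix (rich_reverse hrich) h1
  have := rich_reverse h2
  rwa [List.reverse_reverse] at this

/-- every factor of a rich word is rich. -/
theorem stmt_14 {α : Type*} [DecidableEq α] (w u : List α) (hrich : Rich w)
    (hu : u <:+: w) : Rich u := by
  obtain ⟨s, t, rfl⟩ := hu
  have hsuf : u ++ t <:+ s ++ (u ++ t) := ⟨s, by simp⟩
  have h1 : Rich (u ++ t) := rich_of_suffix (by simpa using hrich) hsuf
  exact rich_of_prefix h1 (List.prefix_append u t)
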